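/- For any irrational real number ξ and any integers a ≥ 1, b ≥ 1, 0 ≤ r ≤ a−1, 0 ≤ s ≤ b−1 with (r,s) ≠ (0,0), there exist infinitely many pairs of integers (m,n) such that |ξ − (am+r)/(bn+s)| ≤ ab/(4(bn+s)²). -/

import Mathlib

set_option maxHeartbeats 1000000 in
/-- Two-candidate lemma, nonnegative ε case. -/
lemma twoCandAux {ε u v Δ : ℝ} (hε0 : 0 ≤ ε) (hε2 : ε ≤ 1/2) (hu : 0 ≤ u) (hv : 0 ≤ v)
    (huv : u + v = Δ) (hΔ0 : 0 < Δ) (hΔ1 : Δ < 1) :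
    |ε - u| * u ≤ Δ/4 ∨ (ε + v) * v ≤ Δ/4 := by
  by_contra hcon
  push_neg at hcon
  obtain ⟨h1, h2⟩ := hcon
  rcases le_or_gt u ε with hc | hc
  · rw [abs_of_nonneg (by linarith : (0:ℝ) ≤ ε - u)] at h1
    have hkey : 0 < 4*ε + 4*v - 4*u - 2 := by nlinarith [h1, h2, hΔ0]
    nlinarith [h1, hkey, sq_nonneg u, mul_nonneg hu (by linarith : (0:ℝ) ≤ 1/2 - ε)]
  · rw [abs_of_neg (by linarith : ε - u < 0)] at h1
    have hu0 : 0 < u := by nlinarith [h1, hΔ0]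
    have hv0 : 0 < v := by nlinarith [h2, hΔ0]
    have hA : 0 < 2*u - ε := by linarith
    have hB : 0 < 2*v + ε := by linarith
    have h3 : ε^2 + Δ < (2*u - ε)^2 := by nlinarith [h1]
    have h4 : ε^2 + Δ < (2*v + ε)^2 := by nlinarith [h2]
    have hR : 0 < ε^2 + Δ := by positivity
    have h5 : (ε^2 + Δ)^2 < ((2*u - ε)*(2*v + ε))^2 := by
      calc (ε^2 + Δ)^2 = (ε^2 + Δ) * (ε^2 + Δ) := by ring
        _ < (2*u - ε)^2 * (ε^2 + Δ) := by exact mul_lt_mul_of_pos_right h3 hR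
        _ < (2*u - ε)^2 * (2*v + ε)^2 := by
            exact mul_lt_mul_of_pos_left h4 (pow_pos hA 2)
        _ = ((2*u - ε)*(2*v + ε))^2 := by ring
    have h6 : ε^2 + Δ < (2*u - ε)*(2*v + ε) := by
      nlinarith [h5, mul_pos hA hB, hR]
    have h7 : (2*u - ε)*(2*v + ε) ≤ Δ^2 := by nlinarith [sq_nonneg (2*u - ε - (2*v + ε))]
    nlinarith [h6, h7, sq_nonneg ε]

/-- Two-candidate lemma, general ε. -/
lemma twoCand {ε u v Δ : ℝ} (hε : |ε| ≤ 1/2) (hu : 0 ≤ u) (hv : 0 ≤ v)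
    (huv : u + v = Δ) (hΔ0 : 0 < Δ) (hΔ1 : Δ < 1) :
    |ε - u| * u ≤ Δ/4 ∨ |ε + v| * v ≤ Δ/4 := by
  rcases le_or_gt 0 ε with hε0 | hε0
  · have h2 : ε ≤ 1/2 := by rw [abs_of_nonneg hε0] at hε; exact hε
    rcases twoCandAux hε0 h2 hu hv huv hΔ0 hΔ1 with h | h
    · exact Or.inl h
    · right
      rwa [abs_of_nonneg (by linarith : (0:ℝ) ≤ ε + v)]
  · have h2 : -ε ≤ 1/2 := by rw [abs_of_neg hε0] at hε; exact hε
    rcases twoCandAux (by linarith : (0:ℝ) ≤ -ε) h2 hv hu (by linarith) hΔ0 hΔ1 with h | h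
    · right
      have : |ε + v| = |-ε - v| := by rw [← abs_neg]; ring_nf
      rwa [this]
    · left
      have : |ε - u| = -ε + u := by rw [abs_of_neg (by linarith : ε - u < 0)]; ring
      rwa [this]

/-- Straddle: representative of y modulo σℤ in [0, |σ|). -/
lemma straddle (y σ : ℝ) (hσ : σ ≠ 0) : ∃ t : ℤ, 0 ≤ y - t*σ ∧ y - t*σ < |σ| := by
  have hP : 0 < |σ| := abs_pos.mpr hσ
  obtain ⟨h0, h1⟩ := toIcoMod_mem_Ico' hP y
  have hsub := self_sub_toIcoMod hP 0 y
  rw [zsmul_eq_mul] at hsub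
  set x := toIcoMod hP 0 y with hx
  set d := toIcoDiv hP 0 y with hd
  rcases hσ.lt_or_gt with hneg | hpos
  · have habs : |σ| = -σ := abs_of_neg hneg
    rw [habs] at hsub h1
    refine ⟨-d, ?_, ?_⟩
    · have hy : y - ((-d : ℤ) : ℝ) * σ = x := by push_cast; linear_combination hsub
      rw [hy]; exact h0
    · have hy : y - ((-d : ℤ) : ℝ) * σ = x := by push_cast; linear_combination hsub
      rw [habs, hy]; exact h1
  · have habs : |σ| = σ := abs_of_pos hpos
    rw [habs] at hsub h1
    refine ⟨d, ?_, ?_⟩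
    · have hy : y - ((d : ℤ) : ℝ) * σ = x := by push_cast; linear_combination hsub
      rw [hy]; exact h0
    · have hy : y - ((d : ℤ) : ℝ) * σ = x := by push_cast; linear_combination hsub
      rw [habs, hy]; exact h1

/-- Good coprime rational approximations with arbitrarily small error. -/
lemma exists_good (θ : ℝ) (hθ : Irrational θ) (M : ℝ) (hM : 0 < M) :
    ∃ q p : ℤ, 0 < q ∧ IsCoprime p q ∧ 0 < |(q:ℝ)*θ - p| ∧ |(q:ℝ)*θ - p| ≤ M ∧
      (q:ℝ)*|(q:ℝ)*θ - p| < 1 := by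
  obtain ⟨N, hN1, hNM⟩ : ∃ N : ℕ, 0 < N ∧ 1/M ≤ (N:ℝ) + 1 := by
    refine ⟨max 1 ⌈1/M⌉₊, by simp, ?_⟩
    have h1 : (1:ℝ)/M ≤ (⌈1/M⌉₊ : ℝ) := Nat.le_ceil _
    have h2 : (⌈1/M⌉₊ : ℝ) ≤ ((max 1 ⌈1/M⌉₊ : ℕ) : ℝ) := by
      exact_mod_cast Nat.le_max_right 1 ⌈1/M⌉₊
    linarith
  have hNR : (0:ℝ) < (N:ℝ) + 1 := by positivity
  have hbound : 1/((N:ℝ)+1) ≤ M := by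
    rw [div_le_iff₀ hNR]
    have := mul_le_mul_of_nonneg_left hNM (le_of_lt hM)
    rw [mul_div_cancel₀ 1 (ne_of_gt hM)] at this
    linarith [this]
  obtain ⟨j, k, hk0, hkN, hjk⟩ := Real.exists_int_int_abs_mul_sub_le θ hN1
  set g : ℕ := Int.gcd k j with hg
  have hgpos : 0 < g := Int.gcd_pos_iff.mpr (Or.inl (ne_of_gt hk0))
  have hgk : (g:ℤ) ∣ k := Int.gcd_dvd_left k j
  have hgj : (g:ℤ) ∣ j := Int.gcd_dvd_right k j
  set q : ℤ := k / (g:ℤ) with hqdef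
  set p : ℤ := j / (g:ℤ) with hpdef
  have hkq : (g:ℤ) * q = k := Int.mul_ediv_cancel' hgk
  have hjp : (g:ℤ) * p = j := Int.mul_ediv_cancel' hgj
  have hq0 : 0 < q := by
    rcases lt_trichotomy q 0 with h | h | h
    · exfalso; nlinarith [hkq, hk0, (by exact_mod_cast hgpos : (0:ℤ) < (g:ℤ))]
    · exfalso; rw [← hkq, h, mul_zero] at hk0; exact lt_irrefl 0 hk0
    · exact h
  have hcop : IsCoprime p q := by
    rw [Int.isCoprime_iff_gcd_eq_one]
    rw [Int.gcd_comm]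
    have := Int.gcd_div_gcd_div_gcd (i := k) (j := j) (by exact_mod_cast hgpos)
    exact this
  have hg1 : (1:ℝ) ≤ (g:ℝ) := by exact_mod_cast hgpos
  have hkR : (k:ℝ) = (g:ℝ) * q := by exact_mod_cast hkq.symm
  have hjR : (j:ℝ) = (g:ℝ) * p := by exact_mod_cast hjp.symm
  have hfact : (k:ℝ)*θ - j = (g:ℝ) * ((q:ℝ)*θ - p) := by rw [hkR, hjR]; ring
  have habs : |(k:ℝ)*θ - j| = (g:ℝ) * |(q:ℝ)*θ - p| := by
    rw [hfact, abs_mul, abs_of_pos (by linarith : (0:ℝ) < (g:ℝ))]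
  have hD0 : 0 < |(q:ℝ)*θ - p| := by
    rw [abs_pos, sub_ne_zero]
    exact (hθ.intCast_mul (ne_of_gt hq0)).ne_int p
  have hDle : |(q:ℝ)*θ - p| ≤ |(k:ℝ)*θ - j| := by
    rw [habs]; nlinarith [hD0]
  have hqk : (q:ℝ) ≤ (k:ℝ) := by
    rw [hkR]; nlinarith [(by exact_mod_cast hq0 : (0:ℝ) < (q:ℝ))]
  refine ⟨q, p, hq0, hcop, hD0, le_trans hDle (le_trans hjk hbound), ?_⟩
  have hqpos : (0:ℝ) < (q:ℝ) := by exact_mod_cast hq0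
  have hkpos : (0:ℝ) < (k:ℝ) := by exact_mod_cast hk0
  have step1 : (q:ℝ)*|(q:ℝ)*θ - p| ≤ (k:ℝ)*|(k:ℝ)*θ - j| :=
    mul_le_mul hqk hDle (le_of_lt hD0) (le_of_lt hkpos)
  have hkNR : (k:ℝ) ≤ (N:ℝ) := by exact_mod_cast hkN
  have step2 : (k:ℝ)*|(k:ℝ)*θ - j| ≤ (N:ℝ) * (1/((N:ℝ)+1)) := by
    apply mul_le_mul hkNR hjk (abs_nonneg _) (by positivity)
  have step3 : (N:ℝ) * (1/((N:ℝ)+1)) < 1 := by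
    rw [mul_one_div, div_lt_one hNR]; linarith
  linarith

/-- Per-scale solution of the shifted Minkowski inequality with small error. -/
lemma exists_sol (θ γ c : ℝ) (hθ : Irrational θ) (hγ : ∀ z : ℤ, γ ≠ (z:ℝ))
    (hc0 : 0 ≤ c) (hc1 : c < 1) (ρ : ℝ) (hρ : 0 < ρ) :
    ∃ n m : ℤ, ((n:ℝ) + c) ≠ 0 ∧ |(n:ℝ)*θ - m - γ| ≤ ρ ∧
      |((n:ℝ) + c) * ((n:ℝ)*θ - m - γ)| ≤ 1/4 := by
  -- distance of γ to ℤ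
  set g : ℝ := |γ - round γ| with hgdef
  have hg0 : 0 < g := by
    rw [hgdef, abs_pos, sub_ne_zero]
    exact hγ (round γ)
  have hgz : ∀ z : ℤ, g ≤ |γ + z| := by
    intro z
    have h1 := round_le γ (-z)
    have h2 : |γ - ((-z : ℤ):ℝ)| = |γ + z| := by push_cast; ring_nf
    rw [h2] at h1; exact h1
  -- scale
  set M : ℝ := min ρ g / 2 with hMdef
  have hM0 : 0 < M := by positivity
  obtain ⟨q, p, hq0, hcop, hD0, hDM, hΔ1⟩ := exists_good θ hθ M hM0
  set δ : ℝ := (q:ℝ)*θ - p with hδdef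
  have hδ0 : δ ≠ 0 := by
    intro h; rw [h, abs_zero] at hD0; exact lt_irrefl 0 hD0
  set D : ℝ := |δ| with hDdef
  have hD0' : 0 < D := hD0
  have hqR : (0:ℝ) < (q:ℝ) := by exact_mod_cast hq0
  set Δ : ℝ := (q:ℝ)*D with hΔdef
  have hΔ0 : 0 < Δ := by positivity
  have hΔlt : Δ < 1 := hΔ1
  have hDρ : D ≤ ρ := le_trans hDM (by rw [hMdef]; have := min_le_left ρ g; linarith)
  have hDg : D < g := lt_of_le_of_lt hDM (by rw [hMdef]; have := min_le_right ρ g; linarith)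
  -- window
  set C : ℤ := round ((q:ℝ)*γ + c*δ) with hCdef
  set ε : ℝ := (q:ℝ)*γ - C with hεdef
  set ε' : ℝ := (q:ℝ)*γ + c*δ - C with hε'def
  have hε' : |ε'| ≤ 1/2 := abs_sub_round _
  have hεε' : ε' = ε + c*δ := by rw [hε'def, hεdef]; ring
  -- residue class
  obtain ⟨x, y, hxy⟩ := hcop
  set σ : ℝ := (q:ℝ)*δ with hσdef
  have hσ0 : σ ≠ 0 := by
    rw [hσdef]; exact mul_ne_zero (ne_of_gt hqR) hδ0
  have hσabs : |σ| = Δ := by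
    rw [hσdef, hΔdef, abs_mul, abs_of_pos hqR, hDdef]
  obtain ⟨t, hu0, huΔ⟩ := straddle (ε - (C*x : ℤ)*δ) σ hσ0
  rw [hσabs] at huΔ
  set u : ℝ := ε - ((C*x : ℤ):ℝ)*δ - t*σ with hudef
  set v : ℝ := Δ - u with hvdef
  have hv0 : 0 < v := by rw [hvdef]; linarith
  -- the two candidates
  set nn : ℤ := C*x + t*q with hnndef
  set mm : ℤ := t*p - C*y with hmmdef
  set d : ℤ := if 0 ≤ δ then 1 else -1 with hddef
  set np : ℤ := nn + d*q with hnpdef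
  set mp' : ℤ := mm + d*p with hmpdef
  have hclass1 : nn*p - mm*q = C := by
    rw [hnndef, hmmdef]; linear_combination C * hxy
  have hclass2 : np*p - mp'*q = C := by
    rw [hnpdef, hmpdef]; linear_combination hclass1
  have hnnδ : (nn:ℝ)*δ = ε - u := by
    rw [hnndef, hudef, hσdef]; push_cast; ring
  have hdδ : ((d:ℤ):ℝ)*((q:ℝ)*δ) = Δ := by
    rw [hddef]
    rcases le_or_gt 0 δ with h | h
    · rw [if_pos h]; push_cast
      rw [hΔdef, hDdef, abs_of_nonneg h]; ring
    · rw [if_neg (not_le.mpr h)]; push_cast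
      rw [hΔdef, hDdef, abs_of_neg h]; ring
  have hnpδ : (np:ℝ)*δ = ε + v := by
    rw [hnpdef]; push_cast
    have : ((nn:ℤ):ℝ)*δ + ((d:ℤ):ℝ)*((q:ℝ)*δ) = ε - u + Δ := by rw [hnnδ, hdδ]
    rw [hvdef]; push_cast at this ⊢; linarith [this]
  -- error evaluation
  have Eval : ∀ N Mz : ℤ, N*p - Mz*q = C →
      (q:ℝ)*((N:ℝ)*θ - Mz - γ) = (N:ℝ)*δ - ε := by
    intro N Mz h
    have hcast : (N:ℝ)*p - (Mz:ℝ)*q = (C:ℝ) := by exact_mod_cast congrArg (fun z : ℤ => (z:ℝ)) h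
    rw [hδdef, hεdef]; linear_combination hcast
  have hE1 : (q:ℝ)*((nn:ℝ)*θ - mm - γ) = -u := by
    rw [Eval nn mm hclass1, hnnδ]; ring
  have hE2 : (q:ℝ)*((np:ℝ)*θ - mp' - γ) = v := by
    rw [Eval np mp' hclass2, hnpδ]; ring
  set E1 : ℝ := (nn:ℝ)*θ - mm - γ with hE1def
  set E2 : ℝ := (np:ℝ)*θ - mp' - γ with hE2def
  have hE1v : E1 = -u/(q:ℝ) := by field_simp; linarith [hE1]
  have hE2v : E2 = v/(q:ℝ) := by field_simp; linarith [hE2]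
  have hE1abs : |E1| = u/(q:ℝ) := by
    rw [hE1v, abs_div, abs_of_pos hqR, abs_neg, abs_of_nonneg hu0]
  have hE2abs : |E2| = v/(q:ℝ) := by
    rw [hE2v, abs_div, abs_of_pos hqR, abs_of_nonneg (le_of_lt hv0)]
  have hE1ρ : |E1| ≤ ρ := by
    rw [hE1abs]
    have h1 : u/(q:ℝ) ≤ D := by
      rw [div_le_iff₀ hqR]
      have : Δ = D*(q:ℝ) := by rw [hΔdef]; ring
      linarith [huΔ, this]
    linarith
  have hE2ρ : |E2| ≤ ρ := by
    rw [hE2abs]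
    have h1 : v/(q:ℝ) ≤ D := by
      rw [div_le_iff₀ hqR]
      have h2 : v ≤ Δ := by rw [hvdef]; linarith
      have : Δ = D*(q:ℝ) := by rw [hΔdef]; ring
      linarith
    linarith
  -- product identities
  have hP1 : |((nn:ℝ) + c) * E1| * Δ = |ε' - u| * u := by
    have hid : (((nn:ℝ) + c) * E1) * σ = (ε' - u) * (-u) := by
      have e1 : ((nn:ℝ) + c)*δ = ε' - u := by rw [hεε']; linear_combination hnnδ
      calc (((nn:ℝ) + c) * E1) * σ = (((nn:ℝ) + c)*δ) * ((q:ℝ)*E1) := by rw [hσdef]; ring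
        _ = (ε' - u) * (-u) := by rw [e1, hE1]
    rw [← hσabs, ← abs_mul, hid, abs_mul, abs_neg, abs_of_nonneg hu0]
  have hP2 : |((np:ℝ) + c) * E2| * Δ = |ε' + v| * v := by
    have hid : (((np:ℝ) + c) * E2) * σ = (ε' + v) * v := by
      have e1 : ((np:ℝ) + c)*δ = ε' + v := by rw [hεε']; linear_combination hnpδ
      calc (((np:ℝ) + c) * E2) * σ = (((np:ℝ) + c)*δ) * ((q:ℝ)*E2) := by rw [hσdef]; ring
        _ = (ε' + v) * v := by rw [e1, hE2]
    rw [← hσabs, ← abs_mul, hid, abs_mul, abs_of_nonneg (le_of_lt hv0)]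
  -- nonvanishing of the shifted index
  have hkey : ∀ (N Mz : ℤ), |(N:ℝ)*θ - Mz - γ| ≤ D → ((N:ℝ) + c) ≠ 0 := by
    intro N Mz hE h0
    rcases eq_or_lt_of_le hc0 with hc | hc
    · -- c = 0, so N = 0
      rw [← hc, add_zero] at h0
      have hN : N = 0 := by exact_mod_cast h0
      rw [hN] at hE
      push_cast at hE
      have : |γ + Mz| ≤ D := by
        have hrw : |(0:ℝ)*θ - Mz - γ| = |γ + Mz| := by
          rw [← abs_neg]; congr 1; ring
        rwa [hrw] at hE
      linarith [hgz Mz]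
    · -- c > 0: (N:ℝ) = -c with 0 < c < 1 impossible
      have : (N:ℝ) = -c := by linarith
      rcases lt_trichotomy N 0 with h | h | h
      · have hN1 : N ≤ -1 := by omega
        have : (N:ℝ) ≤ -1 := by exact_mod_cast hN1
        linarith
      · rw [h] at this; push_cast at this; linarith
      · have : (1:ℝ) ≤ (N:ℝ) := by exact_mod_cast h
        linarith
  -- conclude via the two-candidate lemma
  have hE1D : |E1| ≤ D := by
    rw [hE1abs, div_le_iff₀ hqR]
    have : Δ = D*(q:ℝ) := by rw [hΔdef]; ring
    linarith [huΔ]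
  have hE2D : |E2| ≤ D := by
    rw [hE2abs, div_le_iff₀ hqR]
    have h2 : v ≤ Δ := by rw [hvdef]; linarith
    have : Δ = D*(q:ℝ) := by rw [hΔdef]; ring
    linarith
  rcases twoCand hε' hu0 (le_of_lt hv0) (by rw [hvdef]; ring) hΔ0 hΔlt with hgood | hgood
  · refine ⟨nn, mm, hkey nn mm hE1D, hE1ρ, ?_⟩
    have h4 : |((nn:ℝ) + c) * E1| * Δ ≤ Δ/4 := by rw [hP1]; exact hgood
    have h5 : |((nn:ℝ) + c) * E1| * Δ ≤ (1/4) * Δ := by linarith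
    exact le_of_mul_le_mul_right h5 hΔ0
  · refine ⟨np, mp', hkey np mp' hE2D, hE2ρ, ?_⟩
    have h4 : |((np:ℝ) + c) * E2| * Δ ≤ Δ/4 := by rw [hP2]; exact hgood
    have h5 : |((np:ℝ) + c) * E2| * Δ ≤ (1/4) * Δ := by linarith
    exact le_of_mul_le_mul_right h5 hΔ0

/-- For any irrational ξ and integers a ≥ 1, b ≥ 1, 0 ≤ r < a, 0 ≤ s < b
with (r,s) ≠ (0,0), there are infinitely many pairs (m,n) ∈ ℤ² with
|ξ − (am+r)/(bn+s)| ≤ ab/(4(bn+s)²). -/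
theorem asymptotic_approx_arith_progressions
    (ξ : ℝ) (hξ : Irrational ξ) (a b r s : ℤ)
    (ha : 1 ≤ a) (hb : 1 ≤ b) (hr0 : 0 ≤ r) (hra : r ≤ a - 1)
    (hs0 : 0 ≤ s) (hsb : s ≤ b - 1) (hrs : ¬(r = 0 ∧ s = 0)) :
    {mn : ℤ × ℤ | b * mn.2 + s ≠ 0 ∧
      |ξ - ((a * mn.1 + r : ℤ) : ℝ) / ((b * mn.2 + s : ℤ) : ℝ)| ≤
        ((a * b : ℤ) : ℝ) / (4 * ((b * mn.2 + s : ℤ) : ℝ) ^ 2)}.Infinite := by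
  have haR : (0:ℝ) < (a:ℝ) := by exact_mod_cast ha.trans_lt' (by norm_num)
  have hbR : (0:ℝ) < (b:ℝ) := by exact_mod_cast hb.trans_lt' (by norm_num)
  set θ : ℝ := (b:ℝ)*ξ/(a:ℝ) with hθdef
  set γ : ℝ := ((r:ℝ) - (s:ℝ)*ξ)/(a:ℝ) with hγdef
  set c : ℝ := (s:ℝ)/(b:ℝ) with hcdef
  have hθirr : Irrational θ := by
    have h1 : ((b:ℚ)/(a:ℚ) : ℚ) ≠ 0 := by
      have hb0 : (b:ℚ) ≠ 0 := by exact_mod_cast (by omega : b ≠ 0)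
      have ha0 : (a:ℚ) ≠ 0 := by exact_mod_cast (by omega : a ≠ 0)
      exact div_ne_zero hb0 ha0
    have h2 := hξ.ratCast_mul h1
    have h3 : ((((b:ℚ)/(a:ℚ)) : ℚ) : ℝ) * ξ = θ := by
      rw [hθdef]; push_cast; ring
    rwa [h3] at h2
  have hγz : ∀ z : ℤ, γ ≠ (z:ℝ) := by
    intro z hz
    rw [hγdef, div_eq_iff (ne_of_gt haR)] at hz
    rcases eq_or_ne s 0 with hs | hs
    · rw [hs] at hz
      push_cast at hz
      have hzaR : (r:ℝ) = (z:ℝ) * (a:ℝ) := by linarith [hz]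
      have hza : r = z * a := by exact_mod_cast hzaR
      have hz0 : z = 0 := by
        by_contra hzne
        rcases lt_or_gt_of_ne hzne with h | h
        · have h1 : z ≤ -1 := by omega
          nlinarith [hza, mul_le_mul_of_nonneg_right h1 (show (0:ℤ) ≤ a by omega)]
        · have h1 : 1 ≤ z := by omega
          nlinarith [hza, mul_le_mul_of_nonneg_right h1 (show (0:ℤ) ≤ a by omega)]
      rw [hz0, zero_mul] at hza
      exact hrs ⟨hza, hs⟩
    · apply hξ
      refine ⟨((r - z*a : ℤ):ℚ)/((s:ℤ):ℚ), ?_⟩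
      have hsR : ((s:ℤ):ℝ) ≠ 0 := by exact_mod_cast hs
      push_cast
      rw [div_eq_iff hsR]
      push_cast at hz ⊢
      linear_combination hz
  have hc0 : 0 ≤ c := by rw [hcdef]; positivity
  have hc1 : c < 1 := by
    rw [hcdef, div_lt_one hbR]
    have : (s:ℝ) ≤ (b:ℝ) - 1 := by exact_mod_cast hsb
    linarith
  set S := {mn : ℤ × ℤ | b * mn.2 + s ≠ 0 ∧
      |ξ - ((a * mn.1 + r : ℤ) : ℝ) / ((b * mn.2 + s : ℤ) : ℝ)| ≤
        ((a * b : ℤ) : ℝ) / (4 * ((b * mn.2 + s : ℤ) : ℝ) ^ 2)} with hSdef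
  set f : ℤ × ℤ → ℝ := fun mn => |ξ - ((a * mn.1 + r : ℤ) : ℝ) / ((b * mn.2 + s : ℤ) : ℝ)|
    with hfdef
  -- positivity of f on S (indeed everywhere with Q ≠ 0)
  have hfpos : ∀ mn : ℤ × ℤ, b * mn.2 + s ≠ 0 → 0 < f mn := by
    intro mn hQ
    rw [hfdef, abs_pos, sub_ne_zero]
    intro heq
    apply hξ
    exact ⟨((a*mn.1 + r : ℤ):ℚ)/((b*mn.2 + s : ℤ):ℚ), by push_cast; push_cast at heq; linarith [heq]⟩
  -- key step: solutions with arbitrarily small f-value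
  have key : ∀ ρ : ℝ, 0 < ρ → ∃ mn : ℤ × ℤ, mn ∈ S ∧ 0 < f mn ∧ f mn < ρ := by
    intro ρ hρ
    obtain ⟨n, m, hnc, hEρ, hprod⟩ := exists_sol θ γ c hθirr hγz hc0 hc1 (ρ/(2*(a:ℝ)))
      (by positivity)
    have hQR : ((b*n+s : ℤ):ℝ) = (b:ℝ)*((n:ℝ)+c) := by
      push_cast
      rw [hcdef]
      field_simp
    have hQRne : ((b*n+s : ℤ):ℝ) ≠ 0 := by
      rw [hQR]
      exact mul_ne_zero (ne_of_gt hbR) hnc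
    have hQne : b*n+s ≠ 0 := by exact_mod_cast hQRne
    have hQabs1 : (1:ℝ) ≤ |((b*n+s : ℤ):ℝ)| := by
      have h1 : 1 ≤ |b*n+s| := Int.one_le_abs hQne
      calc (1:ℝ) ≤ ((|b*n+s| : ℤ):ℝ) := by exact_mod_cast h1
        _ = |((b*n+s : ℤ):ℝ)| := by push_cast; rfl
    have haE : (a:ℝ)*((n:ℝ)*θ - m - γ) = ((b*n+s : ℤ):ℝ)*ξ - ((a*m+r : ℤ):ℝ) := by
      rw [hθdef, hγdef]
      push_cast
      field_simp
      ring
    have h1 : |((b*n+s : ℤ):ℝ)| * |((b*n+s : ℤ):ℝ)*ξ - ((a*m+r : ℤ):ℝ)| ≤ (a:ℝ)*(b:ℝ)/4 := by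
      have hc2 : |((b*n+s : ℤ):ℝ) * (((b*n+s : ℤ):ℝ)*ξ - ((a*m+r : ℤ):ℝ))|
          = (a:ℝ)*(b:ℝ) * |((n:ℝ)+c) * ((n:ℝ)*θ - m - γ)| := by
        rw [← haE, hQR]
        rw [show ((b:ℝ)*((n:ℝ)+c)) * ((a:ℝ)*((n:ℝ)*θ - (m:ℝ) - γ))
          = ((a:ℝ)*(b:ℝ)) * (((n:ℝ)+c) * ((n:ℝ)*θ - (m:ℝ) - γ)) by ring]
        rw [abs_mul, abs_of_pos (by positivity : (0:ℝ) < (a:ℝ)*(b:ℝ))]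
      calc |((b*n+s : ℤ):ℝ)| * |((b*n+s : ℤ):ℝ)*ξ - ((a*m+r : ℤ):ℝ)|
          = |((b*n+s : ℤ):ℝ) * (((b*n+s : ℤ):ℝ)*ξ - ((a*m+r : ℤ):ℝ))| := (abs_mul _ _).symm
        _ = (a:ℝ)*(b:ℝ) * |((n:ℝ)+c) * ((n:ℝ)*θ - m - γ)| := hc2
        _ ≤ (a:ℝ)*(b:ℝ) * (1/4) := by
            apply mul_le_mul_of_nonneg_left hprod (by positivity)
        _ = (a:ℝ)*(b:ℝ)/4 := by ring
    have hexp : ξ - ((a*m+r : ℤ):ℝ)/((b*n+s : ℤ):ℝ)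
        = (((b*n+s : ℤ):ℝ)*ξ - ((a*m+r : ℤ):ℝ))/((b*n+s : ℤ):ℝ) := by
      rw [eq_div_iff hQRne, sub_mul, div_mul_cancel₀ _ hQRne]
      ring
    have hfval : f (m, n) = |((b*n+s : ℤ):ℝ)*ξ - ((a*m+r : ℤ):ℝ)|/|((b*n+s : ℤ):ℝ)| := by
      rw [hfdef]
      simp only
      rw [hexp, abs_div]
    refine ⟨(m, n), ⟨hQne, ?_⟩, ?_, ?_⟩
    · -- the approximation bound
      show |ξ - ((a * m + r : ℤ) : ℝ) / ((b * n + s : ℤ) : ℝ)| ≤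
        ((a * b : ℤ) : ℝ) / (4 * ((b * n + s : ℤ) : ℝ) ^ 2)
      rw [hexp, abs_div]
      rw [div_le_div_iff₀ (lt_of_lt_of_le one_pos hQabs1)
        (by positivity : (0:ℝ) < 4 * ((b * n + s : ℤ) : ℝ) ^ 2)]
      have hsq : ((b*n+s : ℤ):ℝ)^2 = |((b*n+s : ℤ):ℝ)|^2 := (sq_abs _).symm
      have h2 := mul_le_mul_of_nonneg_left h1
        (by positivity : (0:ℝ) ≤ 4*|((b*n+s : ℤ):ℝ)|)
      rw [Int.cast_mul, hsq]
      nlinarith [h2]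
    · exact hfpos (m, n) hQne
    · rw [hfval]
      have h3 : |((b*n+s : ℤ):ℝ)*ξ - ((a*m+r : ℤ):ℝ)| = (a:ℝ)*|(n:ℝ)*θ - m - γ| := by
        rw [← haE, abs_mul, abs_of_pos haR]
      have h4 : |((b*n+s : ℤ):ℝ)*ξ - ((a*m+r : ℤ):ℝ)|/|((b*n+s : ℤ):ℝ)|
          ≤ |((b*n+s : ℤ):ℝ)*ξ - ((a*m+r : ℤ):ℝ)| := by
        apply div_le_self (abs_nonneg _) hQabs1
      have h5 : (a:ℝ)*|(n:ℝ)*θ - m - γ| ≤ (a:ℝ)*(ρ/(2*(a:ℝ))) :=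
        mul_le_mul_of_nonneg_left hEρ (le_of_lt haR)
      have h6 : (a:ℝ)*(ρ/(2*(a:ℝ))) = ρ/2 := by field_simp
      calc |((b*n+s : ℤ):ℝ)*ξ - ((a*m+r : ℤ):ℝ)|/|((b*n+s : ℤ):ℝ)|
          ≤ |((b*n+s : ℤ):ℝ)*ξ - ((a*m+r : ℤ):ℝ)| := h4
        _ = (a:ℝ)*|(n:ℝ)*θ - m - γ| := h3
        _ ≤ ρ/2 := by rw [← h6]; exact h5
        _ < ρ := by linarith
  -- conclude infinitude
  by_contra hcon
  rw [Set.not_infinite] at hcon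
  obtain ⟨mn₀, hmn₀, hpos₀, _⟩ := key 1 one_pos
  have hfin := hcon.image f
  have hTne : (hfin.toFinset).Nonempty :=
    ⟨f mn₀, by rw [Set.Finite.mem_toFinset]; exact ⟨mn₀, hmn₀, rfl⟩⟩
  have hρmem := (hfin.toFinset).min'_mem hTne
  simp only [Set.Finite.mem_toFinset] at hρmem
  obtain ⟨mn₁, hmn₁, hf₁⟩ := hρmem
  have hρpos : 0 < (hfin.toFinset).min' hTne := by
    rw [← hf₁]
    exact hfpos mn₁ hmn₁.1
  obtain ⟨mn₂, hmn₂, hpos₂, hlt₂⟩ := key _ hρpos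
  have hmem₂ : f mn₂ ∈ hfin.toFinset := by
    rw [Set.Finite.mem_toFinset]; exact ⟨mn₂, hmn₂, rfl⟩
  have := (hfin.toFinset).min'_le _ hmem₂
  linarith
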